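/- Let G be a finite group with λ(G) = 1 and let N = S₁ × ⋯ × S_t be a normal subgroup of G which is an internal direct product of pairwise isomorphic nonabelian simple subgroups S₁, …, S_t. Conjugation by elements of G permutes the set {S₁, …, S_t}; the group of permutations of {S₁, …, S_t} induced in this way by G is soluble. -/

import Mathlib

open scoped Pointwise commutatorElement


/-- A group is a (nonempty, internal) direct product of nonabelian simple groups:
there is a nonempty independent family of normal subgroups, each nonabelian simple,
whose join is the whole group. -/
def IsProdOfNonabelianSimple (H : Type*) [Group H] : Prop :=
  ∃ (ι : Type) (S : ι → Subgroup H), Nonempty ι ∧ (∀ i, (S i).Normal) ∧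
    (∀ i, IsSimpleGroup ↥(S i)) ∧ (∀ i, ∃ a b : ↥(S i), a * b ≠ b * a) ∧
    iSupIndep S ∧ (⨆ i, S i) = ⊤

/-- `N` is a normal series for a nonsoluble length witness of parameter `k`:
`1 = N 0 ≤ N 1 ≤ ⋯ ≤ N (2k+1) = G`, all terms normal in `G`, the quotients with even
index soluble and the quotients with odd index (nonempty) direct products of
nonabelian simple groups. -/
def IsNonsolubleSeries {G : Type*} [Group G] (k : ℕ) (N : Fin (2*k+2) → Subgroup G) : Prop :=
  Monotone N ∧ N ⟨0, by omega⟩ = ⊥ ∧ N (Fin.last (2*k+1)) = ⊤ ∧ (∀ i, (N i).Normal) ∧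
  (∀ i : Fin (2*k+1), Even (i : ℕ) →
    ∀ [inst : ((N i.castSucc).subgroupOf (N i.succ)).Normal],
      IsSolvable (↥(N i.succ) ⧸ (N i.castSucc).subgroupOf (N i.succ))) ∧
  (∀ i : Fin (2*k+1), ¬ Even (i : ℕ) →
    ∀ [inst : ((N i.castSucc).subgroupOf (N i.succ)).Normal],
      IsProdOfNonabelianSimple (↥(N i.succ) ⧸ (N i.castSucc).subgroupOf (N i.succ)))

/-- The nonsoluble length `λ(G)`: the minimal number of nonsoluble factors in a normal
series of `G` each of whose quotients either is soluble or is a direct product of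
nonabelian simple groups. -/
noncomputable def nonsolubleLength (G : Type*) [Group G] : ℕ :=
  sInf {k | ∃ N : Fin (2*k+2) → Subgroup G, IsNonsolubleSeries k N}

/-- The Fitting subgroup: the subgroup generated by all nilpotent normal subgroups. -/
def fittingSubgroup (G : Type*) [Group G] : Subgroup G :=
  ⨆ N ∈ {N : Subgroup G | N.Normal ∧ Group.IsNilpotent ↥N}, N

/-- A subgroup is subnormal if it is a member of a chain of successively normal subgroups
reaching the whole group. -/
def Subgroup.IsSubnormal' {G : Type*} [Group G] (K : Subgroup G) : Prop :=
  ∃ (n : ℕ) (C : Fin (n+1) → Subgroup G), Monotone C ∧ C ⟨0, by omega⟩ = K ∧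
    C (Fin.last n) = ⊤ ∧ ∀ i : Fin n, ((C i.castSucc).subgroupOf (C i.succ)).Normal

/-- A group is quasisimple if it is perfect and its quotient by the centre is a
nonabelian simple group. -/
def IsQuasisimple (K : Type*) [Group K] : Prop :=
  commutator K = ⊤ ∧ IsSimpleGroup (K ⧸ Subgroup.center K) ∧
    ∃ a b : K ⧸ Subgroup.center K, a * b ≠ b * a

/-- The generalized Fitting subgroup `F*(G)`: the product of the Fitting subgroup and of
all subnormal quasisimple subgroups. -/
def genFittingSubgroup (G : Type*) [Group G] : Subgroup G :=
  fittingSubgroup G ⊔ ⨆ K ∈ {K : Subgroup G | K.IsSubnormal' ∧ IsQuasisimple ↥K}, K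

/-- The generalized Fitting series: `F*₀(G) = 1` and `F*_{i+1}(G)` is the inverse image of
`F*(G/F*_i(G))` in `G`.  (Every term of the series is in fact normal in `G`, so the junk
value in the impossible `else` branch is never used.) -/
noncomputable def genFittingSeries (G : Type*) [Group G] : ℕ → Subgroup G
  | 0 => ⊥
  | n+1 =>
    letI := Classical.propDecidable (genFittingSeries G n).Normal
    if h : (genFittingSeries G n).Normal then
      haveI := h
      Subgroup.comap (QuotientGroup.mk' (genFittingSeries G n))
        (genFittingSubgroup (G ⧸ genFittingSeries G n))
    else ⊤

/-- The generalized Fitting height `h*(G)`: the least `h` with `F*_h(G) = G`. -/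
noncomputable def genFittingHeight (G : Type*) [Group G] : ℕ :=
  sInf {h | genFittingSeries G h = ⊤}

/-- The Fitting series: `F₀(G) = 1` and `F_{i+1}(G)` is the inverse image of
`F(G/F_i(G))` in `G`. -/
noncomputable def fittingSeries (G : Type*) [Group G] : ℕ → Subgroup G
  | 0 => ⊥
  | n+1 =>
    letI := Classical.propDecidable (fittingSeries G n).Normal
    if h : (fittingSeries G n).Normal then
      haveI := h
      Subgroup.comap (QuotientGroup.mk' (fittingSeries G n))
        (fittingSubgroup (G ⧸ fittingSeries G n))
    else ⊤

/-- The Fitting height `h(G)`: the least `h` with `F_h(G) = G`. -/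
noncomputable def fittingHeight (G : Type*) [Group G] : ℕ :=
  sInf {h | fittingSeries G h = ⊤}

/-- The soluble radical `R(G)`: the largest soluble normal subgroup of a finite group,
here defined as the subgroup generated by all soluble normal subgroups. -/
def solubleRadical (G : Type*) [Group G] : Subgroup G :=
  ⨆ N ∈ {N : Subgroup G | N.Normal ∧ IsSolvable ↥N}, N

/-- A minimal normal subgroup. -/
def IsMinimalNormal {G : Type*} [Group G] (N : Subgroup G) : Prop :=
  N.Normal ∧ N ≠ ⊥ ∧ ∀ M : Subgroup G, M.Normal → M ≤ N → M ≠ ⊥ → M = N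

/-- The socle: the subgroup generated by all minimal normal subgroups. -/
def socle (G : Type*) [Group G] : Subgroup G :=
  ⨆ N ∈ {N : Subgroup G | IsMinimalNormal N}, N

/-- A join of normal subgroups is normal. -/
theorem normal_biSup {G : Type*} [Group G] {s : Set (Subgroup G)}
    (hs : ∀ N ∈ s, N.Normal) : (⨆ N ∈ s, N).Normal := by
  constructor
  intro n hn g
  rw [iSup_subtype'] at hn ⊢
  refine Subgroup.iSup_induction _ (C := fun x => g * x * g⁻¹ ∈ ⨆ N : s, (N : Subgroup G))
      hn (fun N x hx => ?_) (by simpa using Subgroup.one_mem _) (fun x y hx hy => ?_)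
  · exact le_iSup (fun N : s => (N : Subgroup G)) N ((hs N N.2).conj_mem x hx g)
  · simpa [mul_assoc] using Subgroup.mul_mem _ hx hy

/-- An intersection of normal subgroups is normal. -/
theorem normal_biInf {G : Type*} [Group G] {s : Set (Subgroup G)}
    (hs : ∀ N ∈ s, N.Normal) : (⨅ N ∈ s, N).Normal := by
  constructor
  intro n hn g
  simp only [Subgroup.mem_iInf] at hn ⊢
  exact fun N hN => (hs N hN).conj_mem n (hn N hN) g

instance solubleRadical.normal (G : Type*) [Group G] : (solubleRadical G).Normal :=
  normal_biSup fun _ hN => hN.1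

instance socle.normal (G : Type*) [Group G] : (socle G).Normal :=
  normal_biSup fun _ hN => hN.1




section AuxMy

variable {G : Type*} [Group G]

theorem myaux_subsingleton_of_commutator_eq_top (H : Type*) [Group H] [hs : Group.IsSolvable H]
    (h : commutator H = ⊤) : Subsingleton H := by
  have hd : ∀ n, derivedSeries H n = ⊤ := by
    intro n
    induction n with
    | zero => exact derivedSeries_zero H
    | succ n ih => rw [derivedSeries_succ, ih]; exact h
  obtain ⟨n, hn⟩ := hs
  rw [hd n] at hn
  constructor
  intro a b
  have ha : a ∈ (⊤ : Subgroup H) := Subgroup.mem_top a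
  have hb : b ∈ (⊤ : Subgroup H) := Subgroup.mem_top b
  rw [hn, Subgroup.mem_bot] at ha hb
  rw [ha, hb]

theorem myaux_commutator_eq_top (H : Type*) [Group H] [IsSimpleGroup H]
    (hnab : ∃ a b : H, a * b ≠ b * a) : commutator H = ⊤ := by
  rcases (Subgroup.commutator_normal (⊤ : Subgroup H) ⊤).eq_bot_or_eq_top with h | h
  · exfalso
    obtain ⟨a, b, hab⟩ := hnab
    rw [Subgroup.commutator_eq_bot_iff_le_centralizer] at h
    exact hab ((Subgroup.mem_centralizer_iff.mp (h (Subgroup.mem_top a)) b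
      (by simp)).symm)
  · exact h

theorem myaux_not_solvable (H : Type*) [Group H] [IsSimpleGroup H]
    (hnab : ∃ a b : H, a * b ≠ b * a) : ¬ IsSolvable H := by
  intro hs
  haveI : Group.IsSolvable H := hs
  have := myaux_subsingleton_of_commutator_eq_top H (myaux_commutator_eq_top H hnab)
  obtain ⟨a, b, hab⟩ := hnab
  exact hab (Subsingleton.elim _ _)

theorem myaux_simple_of_mulEquiv {H K : Type*} [Group H] [Group K] [IsSimpleGroup H]
    (e : H ≃* K) : IsSimpleGroup K := by
  have : Nontrivial K := e.symm.toEquiv.nontrivial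
  exact IsSimpleGroup.isSimpleGroup_of_surjective e.toMonoidHom e.surjective

theorem myaux_nonab_of_mulEquiv {H K : Type*} [Group H] [Group K]
    (e : H ≃* K) (h : ∃ a b : H, a * b ≠ b * a) : ∃ a b : K, a * b ≠ b * a := by
  obtain ⟨a, b, hab⟩ := h
  exact ⟨e a, e b, fun hc => hab (e.injective (by rw [map_mul, map_mul, hc]))⟩

/-- center of a nonabelian simple subgroup is trivial: a central element is 1 -/
theorem myaux_central_in_simple_eq_one {T : Subgroup G} (hTs : IsSimpleGroup T)
    (hTnab : ∃ a b : T, a * b ≠ b * a) {s : G} (hs : s ∈ T)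
    (hcomm : ∀ w ∈ T, s * w = w * s) : s = 1 := by
  haveI := hTs
  have hmem : (⟨s, hs⟩ : T) ∈ Subgroup.center T := by
    rw [Subgroup.mem_center_iff]
    intro g
    exact Subtype.ext (by simpa using (hcomm g.1 g.2).symm)
  rcases (Subgroup.center T).normal_of_characteristic.eq_bot_or_eq_top with h | h
  · rw [h, Subgroup.mem_bot] at hmem
    exact congrArg Subtype.val hmem
  · exfalso
    obtain ⟨a, b, hab⟩ := hTnab
    have ha : a ∈ Subgroup.center T := h ▸ Subgroup.mem_top a
    exact hab ((Subgroup.mem_center_iff.mp ha b).symm)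

/-- a central element of a join of an independent family of normal nonabelian simple
subgroups is trivial -/
theorem myaux_central_eq_one {ι : Type*} (T : ι → Subgroup G)
    (hnorm : ∀ i, (T i).Normal) (hsimple : ∀ i, IsSimpleGroup (T i))
    (hnonab : ∀ i, ∃ a b : (T i), a * b ≠ b * a)
    (hindep : iSupIndep T) (F : Finset ι) (z : G)
    (hz : z ∈ ⨆ i ∈ F, T i) (hc : ∀ i, ∀ w ∈ T i, z * w = w * z) : z = 1 := by
  classical
  induction F using Finset.induction_on generalizing z with
  | empty => simpa using hz
  | @insert a F' ha ih =>
    rw [Finset.iSup_insert] at hz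
    haveI := hnorm a
    have hJnorm : (⨆ i ∈ F', T i).Normal := by
      constructor
      intro n hn g
      have hcom : ∀ i ∈ F', T i ≤ ((⨆ i ∈ F', T i).comap ((MulAut.conj g).toMonoidHom)) := by
        intro i hi x hx
        simp only [Subgroup.mem_comap]
        have hx2 : (MulAut.conj g).toMonoidHom x ∈ T i := by
          simpa using (hnorm i).conj_mem x hx g
        exact le_iSup₂ (f := fun i (_ : i ∈ F') => T i) i hi hx2
      have h2 := iSup₂_le hcom hn
      simpa using h2
    -- z ∈ ↑(T a ⊔ J')
    have hz' : z ∈ (T a : Set G) * ((⨆ i ∈ F', T i : Subgroup G) : Set G) := by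
      rw [← Subgroup.mul_normal]
      exact hz
    obtain ⟨s, hsmem, k, hkmem, hsk⟩ := hz'
    -- k centralizes T a
    have hkc : ∀ w ∈ T a, k * w = w * k := by
      have hle : (⨆ i ∈ F', T i) ≤ Subgroup.centralizer (T a) := by
        refine iSup₂_le fun j hj => ?_
        have hja : j ≠ a := fun h => ha (h ▸ hj)
        rw [← Subgroup.commutator_eq_bot_iff_le_centralizer]
        have h1 : ⁅T j, T a⁆ ≤ T j ⊓ T a := Subgroup.commutator_le_inf _ _
        have h2 : T j ⊓ T a ≤ ⊥ :=
          ((hindep a).mono_right (le_iSup₂ (f := fun j (_ : j ≠ a) => T j) j hja)).symm.le_bot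
        exact le_bot_iff.mp (h1.trans h2)
      intro w hw
      exact (Subgroup.mem_centralizer_iff.mp (hle hkmem) w hw).symm
    -- s is central in T a
    have hs1 : s = 1 := by
      refine myaux_central_in_simple_eq_one (hsimple a) (hnonab a) hsmem ?_
      intro w hw
      have hzw := hc a w hw
      have hkw := hkc w hw
      -- s = z * k⁻¹
      have hs' : s = z * k⁻¹ := by rw [← hsk]; group
      rw [hs']
      have hkC : Commute k w := hkw
      calc z * k⁻¹ * w = z * (k⁻¹ * w) := mul_assoc _ _ _
        _ = z * (w * k⁻¹) := by rw [hkC.inv_left.eq]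
        _ = (z * w) * k⁻¹ := (mul_assoc _ _ _).symm
        _ = (w * z) * k⁻¹ := by rw [hzw]
        _ = w * (z * k⁻¹) := mul_assoc _ _ _
    have hzk : z = k := by rw [← hsk, hs1]; simp
    exact ih k hkmem (fun i w hw => hzk ▸ hc i w hw) ▸ hzk

end AuxMy
section AuxMy2

variable {G : Type*} [Group G]

/-- a solvable normal subgroup of a join of an independent family of
normal nonabelian simple subgroups covering the group is trivial -/
theorem myaux_solvable_normal_eq_bot {ι : Type*} [Fintype ι] (T : ι → Subgroup G)
    (hnorm : ∀ i, (T i).Normal) (hsimple : ∀ i, IsSimpleGroup (T i))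
    (hnonab : ∀ i, ∃ a b : (T i), a * b ≠ b * a)
    (hindep : iSupIndep T) (htop : ⨆ i, T i = ⊤)
    (A : Subgroup G) (hA : A.Normal) (hAsolv : IsSolvable ↥A) : A = ⊥ := by
  haveI := hA
  have h1 : ∀ i, A ⊓ T i = ⊥ := by
    intro i
    haveI := hsimple i
    rcases (Subgroup.normal_subgroupOf (H := T i) (N := A)).eq_bot_or_eq_top with h | h
    · rw [Subgroup.subgroupOf_eq_bot] at h
      exact disjoint_iff.mp h
    · rw [Subgroup.subgroupOf_eq_top] at h
      exfalso
      refine myaux_not_solvable (T i) (hnonab i) ?_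
      have e : ↥((T i).subgroupOf A) ≃* ↥(T i) := Subgroup.subgroupOfEquivOfLe h
      haveI : Group.IsSolvable ↥A := hAsolv
      exact solvable_of_surjective (f := e.toMonoidHom) e.surjective
  have h2 : ∀ a ∈ A, ∀ i, ∀ w ∈ T i, a * w = w * a := by
    intro a haA i w hw
    have hmem : a * w * a⁻¹ * w⁻¹ ∈ A ⊓ T i := by
      refine Subgroup.mem_inf.mpr ⟨?_, ?_⟩
      · have h1' : w * a⁻¹ * w⁻¹ ∈ A := hA.conj_mem a⁻¹ (inv_mem haA) w
        have := mul_mem haA h1'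
        simpa [mul_assoc] using this
      · have h2' : a * w * a⁻¹ ∈ T i := (hnorm i).conj_mem w hw a
        exact mul_mem h2' (inv_mem hw)
    rw [h1 i, Subgroup.mem_bot] at hmem
    have := commutatorElement_eq_one_iff_commute.mp hmem
    exact this
  rw [eq_bot_iff]
  intro a haA
  rw [Subgroup.mem_bot]
  refine myaux_central_eq_one T hnorm hsimple hnonab hindep Finset.univ a ?_ (h2 a haA)
  have : (⨆ i ∈ Finset.univ, T i : Subgroup G) = ⨆ i, T i := by simp
  rw [this, htop]
  exact Subgroup.mem_top a

/-- rigidity: any nonabelian simple subgroup of N normalized by N equals one of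
the factors -/
theorem myaux_rigid {t : ℕ} (S : Fin t → Subgroup G) (N : Subgroup G)
    (hjoin : N = ⨆ i, S i)
    (hSNelem : ∀ i, ∀ n ∈ N, ∀ x ∈ S i, n * x * n⁻¹ ∈ S i)
    (hsimple : ∀ i, IsSimpleGroup ↥(S i))
    (hnonab : ∀ i, ∃ a b : ↥(S i), a * b ≠ b * a)
    (T : Subgroup G) (hTle : T ≤ N) (hTN : ∀ n ∈ N, ∀ x ∈ T, n * x * n⁻¹ ∈ T)
    (hTsimple : IsSimpleGroup ↥T) (hTnonab : ∃ a b : ↥T, a * b ≠ b * a) :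
    ∃ j, T = S j := by
  have hSle : ∀ i, S i ≤ N := fun i => hjoin ▸ le_iSup S i
  by_cases hcase : ∀ j, T ⊓ S j = ⊥
  · exfalso
    have hcen : N ≤ Subgroup.centralizer (T : Set G) := by
      rw [hjoin]
      refine iSup_le fun j => ?_
      intro s hs
      rw [Subgroup.mem_centralizer_iff]
      intro x hx
      have hmem : x * s * x⁻¹ * s⁻¹ ∈ T ⊓ S j := by
        refine Subgroup.mem_inf.mpr ⟨?_, ?_⟩
        · have h1' : s * x⁻¹ * s⁻¹ ∈ T := hTN s (hSle j hs) x⁻¹ (inv_mem hx)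
          have := mul_mem hx h1'
          simpa [mul_assoc] using this
        · have h2' : x * s * x⁻¹ ∈ S j := hSNelem j x (hTle hx) s hs
          exact mul_mem h2' (inv_mem hs)
      rw [hcase j, Subgroup.mem_bot] at hmem
      exact commutatorElement_eq_one_iff_commute.mp hmem
    obtain ⟨a, b, hab⟩ := hTnonab
    refine hab (Subtype.ext ?_)
    have ha := Subgroup.mem_centralizer_iff.mp (hcen (hTle b.2)) a.1 a.2
    exact ha
  · push_neg at hcase
    obtain ⟨j, hj⟩ := hcase
    refine ⟨j, ?_⟩
    have hSjne : S j ≠ ⊥ := by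
      intro hbot
      rw [hbot, inf_bot_eq] at hj
      exact hj rfl
    -- first : S j ≤ T
    have hSjT : S j ≤ T := by
      haveI := hsimple j
      have hKnormal : ((T ⊓ S j).subgroupOf (S j)).Normal := by
        constructor
        intro k hk g
        rw [Subgroup.mem_subgroupOf] at hk ⊢
        constructor
        · exact hTN g.1 (hSle j g.2) k.1 hk.1
        · exact hSNelem j g.1 (hSle j g.2) k.1 hk.2
      rcases hKnormal.eq_bot_or_eq_top with h | h
      · exfalso
        rw [Subgroup.subgroupOf_eq_bot] at h
        exact hj (h.eq_bot_of_le inf_le_right)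
      · rw [Subgroup.subgroupOf_eq_top] at h
        exact fun x hx => (h hx).1
    -- second : T ≤ S j
    haveI := hTsimple
    have hKnormal2 : ((S j).subgroupOf T).Normal := by
      constructor
      intro k hk g
      rw [Subgroup.mem_subgroupOf] at hk ⊢
      exact hSNelem j g.1 (hTle g.2) k.1 hk
    rcases hKnormal2.eq_bot_or_eq_top with h | h
    · exfalso
      rw [Subgroup.subgroupOf_eq_bot] at h
      exact hSjne (h.eq_bot_of_le hSjT)
    · rw [Subgroup.subgroupOf_eq_top] at h
      exact le_antisymm h hSjT

end AuxMy2
section AuxMy3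

variable {G : Type*} [Group G]

theorem myaux_map_subtype_subgroupOf {H K : Subgroup G} (h : H ≤ K) :
    (H.subgroupOf K).map K.subtype = H := by
  rw [Subgroup.subgroupOf_map_subtype, inf_eq_left.mpr h]

theorem myaux_map_subtype_top (K : Subgroup G) :
    (⊤ : Subgroup ↥K).map K.subtype = K := by
  rw [← MonoidHom.range_eq_map, Subgroup.range_subtype]

theorem myaux_commutator_sub_top (K : Subgroup G) (h : ⁅K, K⁆ = K) :
    commutator ↥K = ⊤ := by
  apply Subgroup.map_injective K.subtype_injective
  rw [commutator_def, Subgroup.map_commutator, myaux_map_subtype_top]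
  exact h

theorem myaux_perfect_map_eq_bot {G' : Type*} [Group G'] [Group.IsSolvable G'] (f : G →* G')
    {K : Subgroup G} (h : ⁅K, K⁆ = K) : K.map f = ⊥ := by
  have h2 : ⁅K.map f, K.map f⁆ = K.map f := by rw [← Subgroup.map_commutator, h]
  haveI := myaux_subsingleton_of_commutator_eq_top _ (myaux_commutator_sub_top _ h2)
  exact Subgroup.eq_bot_of_subsingleton _

theorem myaux_simple_perfect (S : Subgroup G) (hs : IsSimpleGroup ↥S)
    (hnab : ∃ a b : ↥S, a * b ≠ b * a) : ⁅S, S⁆ = S := by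
  haveI := hs
  have h1 : commutator ↥S = ⊤ := myaux_commutator_eq_top ↥S hnab
  have h2 := congrArg (Subgroup.map S.subtype) h1
  rw [commutator_def, Subgroup.map_commutator, myaux_map_subtype_top] at h2
  exact h2

theorem myaux_subgroupOf_iSup_top {ι : Sort*} (S : ι → Subgroup G) (N : Subgroup G)
    (h : N = ⨆ i, S i) (hle : ∀ i, S i ≤ N) :
    (⨆ i, (S i).subgroupOf N) = ⊤ := by
  apply Subgroup.map_injective N.subtype_injective
  rw [Subgroup.map_iSup, myaux_map_subtype_top]
  calc (⨆ i, ((S i).subgroupOf N).map N.subtype) = ⨆ i, S i := by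
        refine iSup_congr fun i => myaux_map_subtype_subgroupOf (hle i)
    _ = N := h.symm

theorem myaux_subgroupOf_indep {ι : Type*} (S : ι → Subgroup G) (N : Subgroup G)
    (hle : ∀ i, S i ≤ N) (hindep : iSupIndep S) :
    iSupIndep (fun i => (S i).subgroupOf N) := by
  intro i
  rw [disjoint_iff]
  have h1 : (⨆ j, ⨆ _ : j ≠ i, (S j).subgroupOf N) ≤ (⨆ j, ⨆ _ : j ≠ i, S j).subgroupOf N :=
    iSup₂_le fun j hj => Subgroup.comap_mono (le_iSup₂ (f := fun j (_ : j ≠ i) => S j) j hj)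
  have h2 : ((S i).subgroupOf N) ⊓ (⨆ j, ⨆ _ : j ≠ i, (S j).subgroupOf N) ≤
      ((S i) ⊓ ⨆ j, ⨆ _ : j ≠ i, S j).subgroupOf N := by
    intro x hx
    rw [Subgroup.mem_inf] at hx
    rw [Subgroup.mem_subgroupOf, Subgroup.mem_inf]
    exact ⟨Subgroup.mem_subgroupOf.mp hx.1, Subgroup.mem_subgroupOf.mp (h1 hx.2)⟩
  rw [disjoint_iff.mp (hindep i), Subgroup.bot_subgroupOf] at h2
  exact le_bot_iff.mp h2

end AuxMy3

theorem myaux_solvable_quotient_of_top {G : Type*} [Group G] (K L' M : Subgroup G) [M.Normal]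
    (hK : K = ⊤) (hLM : L' ≤ M) [inst : (L'.subgroupOf K).Normal]
    (hsol : IsSolvable (↥K ⧸ L'.subgroupOf K)) : IsSolvable (G ⧸ M) := by
  let f0 : ↥K →* G ⧸ M := (QuotientGroup.mk' M).comp K.subtype
  have hker : L'.subgroupOf K ≤ f0.ker := by
    intro x hx
    rw [MonoidHom.mem_ker]
    show QuotientGroup.mk' M x.1 = 1
    exact (QuotientGroup.eq_one_iff _).mpr (hLM (Subgroup.mem_subgroupOf.mp hx))
  let f : (↥K ⧸ L'.subgroupOf K) →* G ⧸ M := QuotientGroup.lift _ f0 hker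
  have hsurj : Function.Surjective f := by
    intro q
    obtain ⟨g, rfl⟩ := QuotientGroup.mk'_surjective M q
    exact ⟨QuotientGroup.mk ⟨g, hK ▸ Subgroup.mem_top g⟩, rfl⟩
  haveI : Group.IsSolvable _ := hsol
  exact solvable_of_surjective (f := f) hsurj

/-- If `λ(G) = 1` and `N = S₁ × ⋯ × S_t` is a normal subgroup of `G` which is an internal
direct product of pairwise isomorphic nonabelian simple subgroups, then the group of
permutations induced by conjugation by elements of `G` on `{S₁, …, S_t}` is soluble. -/
theorem solvable_induced_permutations (G : Type*) [Group G] [Finite G]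
    (hG : nonsolubleLength G = 1)
    (t : ℕ) (ht : 0 < t) (N : Subgroup G) [N.Normal] (S : Fin t → Subgroup G)
    (hjoin : N = ⨆ i, S i)
    (hSN : ∀ i, ((S i).subgroupOf N).Normal)
    (hindep : iSupIndep S)
    (hsimple : ∀ i, IsSimpleGroup ↥(S i))
    (hnonab : ∀ i, ∃ a b : ↥(S i), a * b ≠ b * a)
    (hiso : ∀ i j, Nonempty (↥(S i) ≃* ↥(S j))) :
    ∃ P : Subgroup (Equiv.Perm (Fin t)),
      (P : Set (Equiv.Perm (Fin t))) =
        {σ | ∃ g : G, ∀ i, Subgroup.map (MulAut.conj g).toMonoidHom (S i) = S (σ i)} ∧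
      IsSolvable ↥P := by
  classical
  -- basic facts
  have hSleN : ∀ i, S i ≤ N := fun i => hjoin ▸ le_iSup S i
  have hSNelem : ∀ i, ∀ n ∈ N, ∀ x ∈ S i, n * x * n⁻¹ ∈ S i := by
    intro i n hn x hx
    have h := (hSN i).conj_mem ⟨x, hSleN i hx⟩ (Subgroup.mem_subgroupOf.mpr hx) ⟨n, hn⟩
    rw [Subgroup.mem_subgroupOf] at h
    exact h
  have hSbot : ∀ i, S i ≠ ⊥ := by
    intro i hb
    obtain ⟨a, b, hab⟩ := hnonab i
    have hsub : Subsingleton ↥(S i) := by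
      rw [hb]
      exact ⟨fun x y => Subtype.ext (by
        rw [Subgroup.mem_bot.mp x.2, Subgroup.mem_bot.mp y.2])⟩
    exact hab (Subsingleton.elim _ _)
  have hSinj : Function.Injective S := by
    intro i j hij
    by_contra hne
    refine hSbot i (le_bot_iff.mp ?_)
    have h1 : S j ≤ ⨆ k, ⨆ _ : k ≠ i, S k :=
      le_iSup₂ (f := fun k (_ : k ≠ i) => S k) j (fun h => hne h.symm)
    exact (hindep i) le_rfl (hij ▸ h1 : S i ≤ _)
  -- conjugation of subgroups
  have hconj_mapmap : ∀ (g h : G) (K : Subgroup G),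
      K.map (MulAut.conj (g * h)).toMonoidHom
        = (K.map (MulAut.conj h).toMonoidHom).map (MulAut.conj g).toMonoidHom := by
    intro g h K
    rw [Subgroup.map_map]
    congr 1
    ext x
    simp only [MonoidHom.comp_apply, MulEquiv.coe_toMonoidHom, MulAut.conj_apply]
    group
  have hexists : ∀ (g : G) (i : Fin t), ∃ j, (S i).map (MulAut.conj g).toMonoidHom = S j := by
    intro g i
    have hinj : Function.Injective (MulAut.conj g).toMonoidHom := (MulAut.conj g).injective
    refine myaux_rigid S N hjoin hSNelem hsimple hnonab _ ?_ ?_ ?_ ?_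
    · rintro _ ⟨y, hy, rfl⟩
      simp only [MulEquiv.coe_toMonoidHom, MulAut.conj_apply]
      exact ‹N.Normal›.conj_mem y (hSleN i hy) g
    · rintro n hn _ ⟨y, hy, rfl⟩
      have hy' : (g⁻¹ * n * g) * y * (g⁻¹ * n * g)⁻¹ ∈ S i := by
        refine hSNelem i _ ?_ y hy
        have := ‹N.Normal›.conj_mem n hn g⁻¹
        simpa using this
      refine ⟨(g⁻¹ * n * g) * y * (g⁻¹ * n * g)⁻¹, hy', ?_⟩
      simp only [MulEquiv.coe_toMonoidHom, MulAut.conj_apply]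
      group
    · haveI := hsimple i
      exact myaux_simple_of_mulEquiv ((S i).equivMapOfInjective _ hinj)
    · exact myaux_nonab_of_mulEquiv ((S i).equivMapOfInjective _ hinj) (hnonab i)
  choose f hf using hexists
  have hfinj : ∀ g, Function.Injective (f g) := by
    intro g i1 i2 h
    apply hSinj
    apply Subgroup.map_injective (f := (MulAut.conj g).toMonoidHom) (MulAut.conj g).injective
    rw [hf g i1, hf g i2, h]
  have hφmul : ∀ g h : G,
      (Equiv.ofBijective (f (g * h)) (Finite.injective_iff_bijective.mp (hfinj (g * h)))) =
      (Equiv.ofBijective (f g) (Finite.injective_iff_bijective.mp (hfinj g))) *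
      (Equiv.ofBijective (f h) (Finite.injective_iff_bijective.mp (hfinj h))) := by
    intro g h
    refine Equiv.ext fun i => ?_
    show f (g * h) i = f g (f h i)
    apply hSinj
    have hmm := hconj_mapmap g h (S i)
    rw [hf (g * h) i, hf h i, hf g (f h i)] at hmm
    exact hmm
  let φ : G →* Equiv.Perm (Fin t) :=
    MonoidHom.mk' (fun g => Equiv.ofBijective (f g)
      (Finite.injective_iff_bijective.mp (hfinj g))) hφmul
  have hφ : ∀ (g : G) (i : Fin t), (S i).map (MulAut.conj g).toMonoidHom = S (φ g i) :=
    fun g i => hf g i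
  -- extract the series
  have h1mem : 1 ∈ {k | ∃ Nser : Fin (2*k+2) → Subgroup G, IsNonsolubleSeries k Nser} := by
    have hne : {k | ∃ Nser : Fin (2*k+2) → Subgroup G, IsNonsolubleSeries k Nser}.Nonempty := by
      by_contra hcon
      rw [Set.not_nonempty_iff_eq_empty] at hcon
      rw [nonsolubleLength, hcon, Nat.sInf_empty] at hG
      exact absurd hG (by norm_num)
    have hm := Nat.sInf_mem hne
    rwa [show sInf {k | ∃ Nser : Fin (2*k+2) → Subgroup G, IsNonsolubleSeries k Nser} = 1
      from hG] at hm
  obtain ⟨Nser, hmono, hbot, htop, hnormal, heven, hodd⟩ := h1mem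
  haveI hNser : ∀ i, (Nser i).Normal := hnormal
  set R : Subgroup G := Nser ⟨1, by omega⟩ with hRdef
  set L : Subgroup G := Nser ⟨2, by omega⟩ with hLdef
  haveI hRn : R.Normal := hnormal _
  haveI hLn : L.Normal := hnormal _
  -- R is solvable
  have hRsolv : IsSolvable ↥R := by
    have h0 := heven ⟨0, by omega⟩ (Even.zero)
    have e : (Nser (⟨0, by omega⟩ : Fin (2*1+1)).castSucc).subgroupOf
        (Nser (⟨0, by omega⟩ : Fin (2*1+1)).succ) = ⊥ := by
      rw [show Nser ((⟨0, by omega⟩ : Fin (2*1+1)).castSucc) = ⊥ from hbot]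
      exact Subgroup.bot_subgroupOf _
    haveI : Group.IsSolvable _ := h0
    have efin := (QuotientGroup.quotientMulEquivOfEq e).trans
      (QuotientGroup.quotientBot (G := ↥(Nser (⟨0, by omega⟩ : Fin (2*1+1)).succ)))
    exact solvable_of_surjective (f := efin.toMonoidHom) efin.surjective
  -- L/R is a product of nonabelian simple groups
  have hne1 : ¬ Even (((⟨1, by omega⟩ : Fin (2*1+1)) : ℕ)) := by
    show ¬ Even 1
    decide
  have hprod : IsProdOfNonabelianSimple (↥L ⧸ R.subgroupOf L) :=
    hodd ⟨1, by omega⟩ hne1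
  -- quotient of G by anything between L and G (with top series end) is solvable
  have h2sol := heven ⟨2, by omega⟩ ⟨1, rfl⟩
  have hGLsolv : IsSolvable (G ⧸ L) :=
    myaux_solvable_quotient_of_top (Nser (⟨2, by omega⟩ : Fin (2*1+1)).succ) L L htop
      le_rfl h2sol
  -- N is contained in L
  have hNL : N ≤ L := by
    have hNperf : ⁅N, N⁆ = N := by
      refine le_antisymm (Subgroup.commutator_le_right N N) ?_
      nth_rewrite 1 [hjoin]
      refine iSup_le fun i => ?_
      have := myaux_simple_perfect (S i) (hsimple i) (hnonab i)
      exact this ▸ Subgroup.commutator_mono (hSleN i) (hSleN i)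
    haveI : Group.IsSolvable _ := hGLsolv
    have hmap := myaux_perfect_map_eq_bot (QuotientGroup.mk' L) hNperf
    intro n hn
    have hmem : QuotientGroup.mk' L n ∈ N.map (QuotientGroup.mk' L) :=
      Subgroup.mem_map.mpr ⟨n, hn, rfl⟩
    rw [hmap, Subgroup.mem_bot] at hmem
    exact (QuotientGroup.eq_one_iff n).mp hmem
  -- N ⊓ R = ⊥
  have hNRbot : N ⊓ R = ⊥ := by
    have hT'simple : ∀ i, IsSimpleGroup ↥((S i).subgroupOf N) := fun i => by
      haveI := hsimple i
      exact myaux_simple_of_mulEquiv (Subgroup.subgroupOfEquivOfLe (hSleN i)).symm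
    have hT'nonab : ∀ i, ∃ a b : ↥((S i).subgroupOf N), a * b ≠ b * a := fun i =>
      myaux_nonab_of_mulEquiv (Subgroup.subgroupOfEquivOfLe (hSleN i)).symm (hnonab i)
    have hT'indep := myaux_subgroupOf_indep S N hSleN hindep
    have hT'top := myaux_subgroupOf_iSup_top S N hjoin hSleN
    haveI : (N ⊓ R).Normal := Subgroup.normal_inf_normal N R
    have hAsolv : IsSolvable ↥((N ⊓ R).subgroupOf N) := by
      haveI : Group.IsSolvable _ := hRsolv
      have e2 : ↥((N ⊓ R).subgroupOf R) ≃* ↥(N ⊓ R) :=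
        Subgroup.subgroupOfEquivOfLe inf_le_right
      haveI : Group.IsSolvable ↥(N ⊓ R) :=
        solvable_of_surjective (f := e2.toMonoidHom) e2.surjective
      have e1 : ↥((N ⊓ R).subgroupOf N) ≃* ↥(N ⊓ R) :=
        Subgroup.subgroupOfEquivOfLe inf_le_left
      exact solvable_of_surjective (f := e1.symm.toMonoidHom) e1.symm.surjective
    have hres := myaux_solvable_normal_eq_bot (fun i => (S i).subgroupOf N) hSN hT'simple
      hT'nonab hT'indep hT'top ((N ⊓ R).subgroupOf N) (Subgroup.normal_subgroupOf) hAsolv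
    have hmapped := congrArg (Subgroup.map N.subtype) hres
    rwa [myaux_map_subtype_subgroupOf inf_le_left, Subgroup.map_bot] at hmapped
  -- work in Q = L / R
  obtain ⟨ι, T, hι, hTnorm, hTsimp, hTnab, hTindep, hTtop⟩ := hprod
  set π : ↥L →* (↥L ⧸ R.subgroupOf L) := QuotientGroup.mk' (R.subgroupOf L) with hπdef
  haveI hNLnorm : (N.subgroupOf L).Normal := Subgroup.normal_subgroupOf
  set Nbar : Subgroup (↥L ⧸ R.subgroupOf L) := (N.subgroupOf L).map π with hNbardef
  haveI hNbarnorm : Nbar.Normal :=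
    Subgroup.Normal.map hNLnorm π (QuotientGroup.mk'_surjective _)
  set C : Subgroup (↥L ⧸ R.subgroupOf L) := Subgroup.centralizer (Nbar : Set _) with hCdef
  have hsupQ : Nbar ⊔ C = ⊤ := by
    rw [eq_top_iff, ← hTtop]
    refine iSup_le fun k => ?_
    haveI := hTnorm k
    haveI := hTsimp k
    haveI : (T k ⊓ Nbar).Normal := Subgroup.normal_inf_normal _ _
    rcases (Subgroup.normal_subgroupOf (H := T k) (N := T k ⊓ Nbar)).eq_bot_or_eq_top
      with h | h
    · rw [Subgroup.subgroupOf_eq_bot] at h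
      have hb : T k ⊓ Nbar = ⊥ := h.eq_bot_of_le inf_le_left
      have hcomm : ⁅T k, Nbar⁆ = ⊥ :=
        le_bot_iff.mp ((Subgroup.commutator_le_inf _ _).trans hb.le)
      exact le_sup_of_le_right (Subgroup.commutator_eq_bot_iff_le_centralizer.mp hcomm)
    · rw [Subgroup.subgroupOf_eq_top] at h
      exact le_sup_of_le_left (h.trans inf_le_right)
  -- every element of L fixes each factor under conjugation
  have hLker : ∀ l ∈ L, ∀ i, (S i).map (MulAut.conj l).toMonoidHom = S i := by
    intro l hl
    have hmem : π ⟨l, hl⟩ ∈ ((Nbar ⊔ C : Subgroup _) : Set _) := by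
      rw [hsupQ]; trivial
    rw [Subgroup.normal_mul] at hmem
    obtain ⟨q, hq, c, hc, hqc⟩ := hmem
    obtain ⟨x, hxNL, hxq⟩ := Subgroup.mem_map.mp hq
    set m : ↥L := x⁻¹ * ⟨l, hl⟩ with hm
    have hπm : π m = c := by
      have h1 : π m = (π x)⁻¹ * π ⟨l, hl⟩ := by rw [hm, map_mul, map_inv]
      rw [h1, hxq, ← hqc]
      group
    have hmcent : ∀ y ∈ N, m.1 * y = y * m.1 := by
      intro y hy
      have hyL : y ∈ L := hNL hy
      have hybar : π ⟨y, hyL⟩ ∈ Nbar :=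
        Subgroup.mem_map.mpr ⟨⟨y, hyL⟩, Subgroup.mem_subgroupOf.mpr hy, rfl⟩
      have hcy : π ⟨y, hyL⟩ * c = c * π ⟨y, hyL⟩ :=
        Subgroup.mem_centralizer_iff.mp hc _ hybar
      have hcomm1 : ⁅π m, π ⟨y, hyL⟩⁆ = 1 :=
        commutatorElement_eq_one_iff_commute.mpr (by rw [hπm]; exact hcy.symm)
      rw [← map_commutatorElement] at hcomm1
      have hker1 : ⁅m, (⟨y, hyL⟩ : ↥L)⁆ ∈ R.subgroupOf L := by
        rw [← QuotientGroup.ker_mk' (R.subgroupOf L)]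
        exact hcomm1
      have hinR : (⁅m, (⟨y, hyL⟩ : ↥L)⁆ : ↥L).1 ∈ R := Subgroup.mem_subgroupOf.mp hker1
      have hmem2 : m.1 * y * m.1⁻¹ * y⁻¹ ∈ N ⊓ R := by
        refine Subgroup.mem_inf.mpr ⟨?_, ?_⟩
        · exact mul_mem (‹N.Normal›.conj_mem y hy m.1) (inv_mem hy)
        · exact hinR
      rw [hNRbot, Subgroup.mem_bot] at hmem2
      exact commutatorElement_eq_one_iff_commute.mp hmem2
    intro i
    have hmfix : (S i).map (MulAut.conj m.1).toMonoidHom = S i := by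
      have key : ∀ w ∈ S i, (MulAut.conj m.1).toMonoidHom w = w := by
        intro w hw
        simp only [MulEquiv.coe_toMonoidHom, MulAut.conj_apply]
        rw [hmcent w (hSleN i hw)]
        group
      apply le_antisymm
      · rintro _ ⟨w, hw, rfl⟩
        rw [key w hw]; exact hw
      · intro w hw
        exact ⟨w, hw, key w hw⟩
    have hxN : x.1 ∈ N := Subgroup.mem_subgroupOf.mp hxNL
    have hxfix : (S i).map (MulAut.conj x.1).toMonoidHom = S i := by
      apply le_antisymm
      · rintro _ ⟨w, hw, rfl⟩
        simp only [MulEquiv.coe_toMonoidHom, MulAut.conj_apply]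
        exact hSNelem i x.1 hxN w hw
      · intro w hw
        refine ⟨x.1⁻¹ * w * x.1, by simpa using hSNelem i x.1⁻¹ (inv_mem hxN) w hw, ?_⟩
        simp only [MulEquiv.coe_toMonoidHom, MulAut.conj_apply]
        group
    have hlx : l = x.1 * m.1 := by
      have hxm : (x * m : ↥L) = ⟨l, hl⟩ := by rw [hm]; group
      exact (congrArg Subtype.val hxm).symm
    rw [hlx, hconj_mapmap, hmfix, hxfix]
  have hφker : L ≤ φ.ker := by
    intro l hl
    rw [MonoidHom.mem_ker]
    refine Equiv.ext fun i => ?_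
    refine hSinj ?_
    rw [← hφ l i, hLker l hl i]
    rfl
  -- conclusion
  refine ⟨φ.range, ?_, ?_⟩
  · ext σ
    simp only [SetLike.mem_coe, MonoidHom.mem_range, Set.mem_setOf_eq]
    constructor
    · rintro ⟨g, rfl⟩
      exact ⟨g, fun i => hφ g i⟩
    · rintro ⟨g, hg⟩
      exact ⟨g, Equiv.ext fun i => hSinj ((hφ g i).symm.trans (hg i))⟩
  · have hGkersolv : IsSolvable (G ⧸ φ.ker) :=
      myaux_solvable_quotient_of_top (Nser (⟨2, by omega⟩ : Fin (2*1+1)).succ) L φ.ker htop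
        hφker h2sol
    haveI : Group.IsSolvable _ := hGkersolv
    have e := QuotientGroup.quotientKerEquivRange φ
    exact solvable_of_surjective (f := e.toMonoidHom) e.surjective
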